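/- Let R be a commutative ring and let C be the symmetric monoidal category of R-modules. Then the category of left modules over the commutative monoid Com in the Day-convolution symmetric monoidal category of species in C is equivalent to the category of FI-modules in C, i.e. the functor category from FI to C. Under this equivalence, a Com-module M acquires, for each inclusion S ⊂ T of finite sets, the transition map M(S) ≅ M(S) ⊗ Com(T∖S) → M(T) induced by the module structure. -/

import Mathlib

open CategoryTheory

/-- The groupoid `𝐁` of finite sets and bijections. -/
structure BijCat : Type 1 where
  /-- the underlying finite set -/
  carrier : Type
  [fintype : Fintype carrier]

attribute [instance] BijCat.fintype

instance : CoeSort BijCat Type := ⟨BijCat.carrier⟩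

instance : Category BijCat where
  Hom X Y := X ≃ Y
  id X := Equiv.refl X
  comp f g := f.trans g
  id_comp f := Equiv.refl_trans f
  comp_id f := Equiv.trans_refl f
  assoc f g h := (Equiv.trans_assoc f g h).symm

/-- The disjoint union of two finite sets. -/
def sumObj (X Y : BijCat) : BijCat := { carrier := Sum X Y }

/-- The empty finite set. -/
def emptyObj : BijCat := { carrier := PEmpty }

variable (R : Type) [CommRing R]

/-- A left module, in the Day-convolution symmetric monoidal category of species in
`R`-modules, over the commutative monoid `Com` (whose value on every finite set is the
monoidal unit `R`, with multiplications the canonical isomorphisms `R ⊗ R ≅ R`),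
presented explicitly: since `(Com ⊗ M)(S) = ⊕_{S = T₁ ⊔ T₂} Com(T₁) ⊗ M(T₂)` and
`Com(T₁) ⊗ M(T₂) ≅ M(T₂)`, the action is determined by maps `M(X) → M(X ⊔ Y)`, natural
in bijections in both variables, which are unital and associative. -/
structure ComModule where
  /-- the underlying species -/
  V : BijCat ⥤ ModuleCat.{0} R
  /-- the `Com`-action `M(X) ≅ M(X) ⊗ Com(Y) → M(X ⊔ Y)` -/
  act : ∀ X Y : BijCat, V.obj X ⟶ V.obj (sumObj X Y)
  act_unit : ∀ X : BijCat,
    act X emptyObj = V.map ((Equiv.sumEmpty X.carrier PEmpty).symm : X ⟶ sumObj X emptyObj)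
  act_assoc : ∀ X Y Z : BijCat,
    act X Y ≫ act (sumObj X Y) Z =
      act X (sumObj Y Z) ≫
        V.map ((Equiv.sumAssoc X.carrier Y.carrier Z.carrier).symm :
          sumObj X (sumObj Y Z) ⟶ sumObj (sumObj X Y) Z)
  act_natural : ∀ (X X' Y Y' : BijCat) (e : X ⟶ X') (f : Y ⟶ Y'),
    act X Y ≫ V.map ((Equiv.sumCongr e f) : sumObj X Y ⟶ sumObj X' Y') =
      V.map e ≫ act X' Y'

/-- A morphism of `Com`-modules: a morphism of species compatible with the action. -/
@[ext]
structure ComModuleHom (M N : ComModule R) where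
  /-- the underlying morphism of species -/
  τ : M.V ⟶ N.V
  compat : ∀ X Y : BijCat,
    M.act X Y ≫ τ.app (sumObj X Y) = τ.app X ≫ N.act X Y

instance : Category (ComModule R) where
  Hom M N := ComModuleHom R M N
  id M := ⟨𝟙 M.V, by intro X Y; simp⟩
  comp f g := ⟨f.τ ≫ g.τ, by
    intro X Y
    simp only [NatTrans.comp_app]
    rw [← Category.assoc, f.compat, Category.assoc, g.compat, ← Category.assoc]⟩
  id_comp f := by apply ComModuleHom.ext; simp
  comp_id f := by apply ComModuleHom.ext; simp
  assoc f g h := by apply ComModuleHom.ext; simp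

/-- The category `FI` of finite sets and injections. -/
structure FinInjCat : Type 1 where
  /-- the underlying finite set -/
  carrier : Type
  [fintype : Fintype carrier]

attribute [instance] FinInjCat.fintype

instance : CoeSort FinInjCat Type := ⟨FinInjCat.carrier⟩

instance : Category FinInjCat where
  Hom X Y := X ↪ Y
  id X := Function.Embedding.refl X
  comp f g := f.trans g

/-- A finite set with bijections, regarded as an object of `FI`. -/
def toFinInj (X : BijCat) : FinInjCat := { carrier := X.carrier }

/-- The canonical inclusion `X ⊆ X ⊔ Y`, as a morphism of `FI`. -/
def inlEmb (X Y : BijCat) : toFinInj X ⟶ toFinInj (sumObj X Y) :=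
  ⟨Sum.inl, Sum.inl_injective⟩


section Aux

variable {R}

/-- View a morphism of `FinInjCat` as an embedding. -/
def emb {S T : FinInjCat} (f : S ⟶ T) : S.carrier ↪ T.carrier := f

/-- View a morphism of `BijCat` as an equivalence. -/
def bij {X Y : BijCat} (e : X ⟶ Y) : X.carrier ≃ Y.carrier := e

/-- View an equivalence as a morphism of `BijCat`. -/
def homOf {X Y : BijCat} (e : X.carrier ≃ Y.carrier) : X ⟶ Y := e

/-- View an embedding as a morphism of `FinInjCat`. -/
def fhomOf {S T : FinInjCat} (f : S.carrier ↪ T.carrier) : S ⟶ T := f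

/-- The complement of the image of an injection, as an object of `BijCat`. -/
noncomputable def cmpl {S T : FinInjCat} (f : S ⟶ T) : BijCat :=
  letI : DecidablePred (fun t : T.carrier => ∀ s, emb f s ≠ t) := Classical.decPred _
  { carrier := {t : T.carrier // ∀ s, emb f s ≠ t} }

/-- The canonical bijection `S ⊔ (T ∖ f(S)) ≃ T`. -/
noncomputable def phi {S T : FinInjCat} (f : S ⟶ T) :
    Sum S.carrier (cmpl f).carrier ≃ T.carrier :=
  Equiv.ofBijective (Sum.elim (emb f) Subtype.val) (by
    constructor
    · rintro (a | a) (b | b) h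
      · exact congrArg Sum.inl ((emb f).injective h)
      · exact ((b.2 a) h).elim
      · exact ((a.2 b) h.symm).elim
      · exact congrArg Sum.inr (Subtype.ext h)
    · intro t
      by_cases h : ∃ s, emb f s = t
      · obtain ⟨s, hs⟩ := h
        exact ⟨Sum.inl s, hs⟩
      · push_neg at h
        exact ⟨Sum.inr ⟨t, h⟩, rfl⟩)

@[simp] lemma phi_apply {S T : FinInjCat} (f : S ⟶ T) (z) :
    phi f z = Sum.elim (emb f) Subtype.val z := rfl

variable (M : ComModule R)

lemma Vmap_congr {X Y : BijCat} {e e' : X ⟶ Y} (h : ∀ x, bij e x = bij e' x) :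
    M.V.map e = M.V.map e' :=
  congrArg M.V.map (Equiv.ext h)

lemma map_map_symm {X Y : BijCat} (e : X.carrier ≃ Y.carrier) :
    M.V.map (homOf e) ≫ M.V.map (homOf e.symm) = 𝟙 (M.V.obj X) := by
  rw [← M.V.map_comp]
  have h : (homOf e ≫ homOf e.symm : X ⟶ X) = 𝟙 X := Equiv.self_trans_symm e
  rw [h, M.V.map_id]

lemma act_natural' (X X' Y Y' : BijCat) (e : X.carrier ≃ X'.carrier)
    (g : Y.carrier ≃ Y'.carrier) :
    M.act X Y ≫ M.V.map (homOf (Equiv.sumCongr e g) :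
        sumObj X Y ⟶ sumObj X' Y') =
      M.V.map (homOf e : X ⟶ X') ≫ M.act X' Y' :=
  M.act_natural X X' Y Y' (homOf e) (homOf g)

lemma act_assoc' (X Y Z : BijCat) :
    M.act X Y ≫ M.act (sumObj X Y) Z =
      M.act X (sumObj Y Z) ≫
        M.V.map (homOf (Equiv.sumAssoc X.carrier Y.carrier Z.carrier).symm :
          sumObj X (sumObj Y Z) ⟶ sumObj (sumObj X Y) Z) :=
  M.act_assoc X Y Z

lemma act_conj (X Y Y' : BijCat) (g : Y.carrier ≃ Y'.carrier) :
    M.act X Y ≫ M.V.map (homOf (Equiv.sumCongr (Equiv.refl X.carrier) g) :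
        sumObj X Y ⟶ sumObj X Y') =
      M.act X Y' := by
  have h := act_natural' M X X Y Y' (Equiv.refl X.carrier) g
  rw [show (homOf (Equiv.refl X.carrier) : X ⟶ X) = 𝟙 X from rfl,
    CategoryTheory.Functor.map_id, Category.id_comp] at h
  exact h

/-- The inclusion equivalence when the second summand is empty. -/
def inlEquiv (X Y : BijCat) [IsEmpty Y.carrier] : X.carrier ≃ Sum X.carrier Y.carrier where
  toFun := Sum.inl
  invFun := Sum.elim id (fun y => (IsEmpty.false y).elim)
  left_inv := fun _ => rfl
  right_inv := fun z => by
    cases z with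
    | inl x => rfl
    | inr y => exact (IsEmpty.false y).elim

lemma act_isEmpty (X Y : BijCat) [IsEmpty Y.carrier] :
    M.act X Y = M.V.map (homOf (inlEquiv X Y) : X ⟶ sumObj X Y) := by
  have h1 : M.act X Y ≫ M.V.map (homOf (Equiv.sumCongr (Equiv.refl X.carrier)
      (Equiv.equivPEmpty Y.carrier)) : sumObj X Y ⟶ sumObj X emptyObj) =
      M.V.map (homOf (Equiv.sumEmpty X.carrier PEmpty).symm : X ⟶ sumObj X emptyObj) := by
    have h := act_conj M X Y emptyObj (Equiv.equivPEmpty Y.carrier)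
    rw [M.act_unit] at h
    exact h
  calc M.act X Y
      = M.act X Y ≫ (M.V.map (homOf (Equiv.sumCongr (Equiv.refl X.carrier)
          (Equiv.equivPEmpty Y.carrier)) : sumObj X Y ⟶ sumObj X emptyObj) ≫
          M.V.map (homOf (Equiv.sumCongr (Equiv.refl X.carrier)
          (Equiv.equivPEmpty Y.carrier)).symm : sumObj X emptyObj ⟶ sumObj X Y)) := by
        exact ((congrArg (fun k => M.act X Y ≫ k) (map_map_symm M _)).trans (Category.comp_id _)).symm
    _ = M.V.map (homOf (Equiv.sumEmpty X.carrier PEmpty).symm) ≫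
          M.V.map (homOf (Equiv.sumCongr (Equiv.refl X.carrier)
          (Equiv.equivPEmpty Y.carrier)).symm : sumObj X emptyObj ⟶ sumObj X Y) := by
        rw [← Category.assoc, h1]
    _ = M.V.map (homOf (inlEquiv X Y)) := by
        rw [← M.V.map_comp]
        exact Vmap_congr M (fun x => rfl)

end Aux


section Construction

variable {R}

/-- The transition map of the FI-module associated to a `Com`-module. -/
noncomputable def Fmap (M : ComModule R) {S T : FinInjCat} (f : S ⟶ T) :
    M.V.obj ⟨S.carrier⟩ ⟶ M.V.obj ⟨T.carrier⟩ :=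
  M.act ⟨S.carrier⟩ (cmpl f) ≫
    M.V.map (homOf (phi f) : sumObj ⟨S.carrier⟩ (cmpl f) ⟶ (⟨T.carrier⟩ : BijCat))

lemma Fmap_id (M : ComModule R) (S : FinInjCat) :
    Fmap M (𝟙 S) = 𝟙 (M.V.obj ⟨S.carrier⟩) := by
  haveI : IsEmpty (cmpl (𝟙 S)).carrier := ⟨fun c => c.2 c.1 rfl⟩
  unfold Fmap
  rw [act_isEmpty, ← M.V.map_comp]
  have h : ((homOf (inlEquiv (⟨S.carrier⟩ : BijCat) (cmpl (𝟙 S))) :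
        (⟨S.carrier⟩ : BijCat) ⟶ sumObj ⟨S.carrier⟩ (cmpl (𝟙 S))) ≫
      (homOf (phi (𝟙 S)) :
        sumObj ⟨S.carrier⟩ (cmpl (𝟙 S)) ⟶ (⟨S.carrier⟩ : BijCat))) =
      𝟙 (⟨S.carrier⟩ : BijCat) := Equiv.ext fun x => rfl
  rw [h, M.V.map_id]

/-- The comparison bijection `(T ∖ f(S)) ⊔ (U ∖ g(T)) ≃ U ∖ g(f(S))`. -/
noncomputable def cmplComp {S T U : FinInjCat} (f : S ⟶ T) (g : T ⟶ U) :
    Sum (cmpl f).carrier (cmpl g).carrier ≃ (cmpl (f ≫ g)).carrier :=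
  Equiv.ofBijective (Sum.elim
    (fun c => ⟨emb g c.1, fun s h => c.2 s ((emb g).injective h)⟩)
    (fun c => ⟨c.1, fun s h => c.2 (emb f s) h⟩)) (by
    constructor
    · rintro (a | a) (b | b) h <;> replace h := Subtype.ext_iff.mp h
      · exact congrArg Sum.inl (Subtype.ext ((emb g).injective h))
      · exact (b.2 a.1 h).elim
      · exact (a.2 b.1 h.symm).elim
      · exact congrArg Sum.inr (Subtype.ext h)
    · intro t
      by_cases h : ∃ y, emb g y = t.1
      · obtain ⟨y, hy⟩ := h
        refine ⟨Sum.inl ⟨y, fun s hs => t.2 s ?_⟩, Subtype.ext hy⟩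
        show emb g (emb f s) = t.1
        rw [hs, hy]
      · push_neg at h
        exact ⟨Sum.inr ⟨t.1, h⟩, Subtype.ext rfl⟩)

lemma Fmap_comp (M : ComModule R) {S T U : FinInjCat} (f : S ⟶ T) (g : T ⟶ U) :
    Fmap M (f ≫ g) = Fmap M f ≫ Fmap M g := by
  have step3 : M.act ⟨S.carrier⟩ (sumObj (cmpl f) (cmpl g)) ≫
      M.V.map (homOf (Equiv.sumCongr (Equiv.refl S.carrier) (cmplComp f g)) :
        sumObj ⟨S.carrier⟩ (sumObj (cmpl f) (cmpl g)) ⟶ sumObj ⟨S.carrier⟩ (cmpl (f ≫ g))) =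
      M.act ⟨S.carrier⟩ (cmpl (f ≫ g)) :=
    act_conj M ⟨S.carrier⟩ (sumObj (cmpl f) (cmpl g)) (cmpl (f ≫ g)) (cmplComp f g)
  have step2 : M.act ⟨S.carrier⟩ (cmpl f) ≫ M.act (sumObj ⟨S.carrier⟩ (cmpl f)) (cmpl g) =
      M.act ⟨S.carrier⟩ (sumObj (cmpl f) (cmpl g)) ≫
        M.V.map (homOf (Equiv.sumAssoc S.carrier (cmpl f).carrier (cmpl g).carrier).symm :
          sumObj ⟨S.carrier⟩ (sumObj (cmpl f) (cmpl g)) ⟶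
            sumObj (sumObj ⟨S.carrier⟩ (cmpl f)) (cmpl g)) :=
    act_assoc' M ⟨S.carrier⟩ (cmpl f) (cmpl g)
  have step1 : M.act (sumObj ⟨S.carrier⟩ (cmpl f)) (cmpl g) ≫
      M.V.map (homOf (Equiv.sumCongr (phi f) (Equiv.refl (cmpl g).carrier)) :
        sumObj (sumObj ⟨S.carrier⟩ (cmpl f)) (cmpl g) ⟶ sumObj ⟨T.carrier⟩ (cmpl g)) =
      M.V.map (homOf (phi f) : sumObj ⟨S.carrier⟩ (cmpl f) ⟶ (⟨T.carrier⟩ : BijCat)) ≫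
        M.act ⟨T.carrier⟩ (cmpl g) :=
    act_natural' M (sumObj ⟨S.carrier⟩ (cmpl f)) ⟨T.carrier⟩ (cmpl g) (cmpl g)
      (phi f) (Equiv.refl (cmpl g).carrier)
  have comp_eq : ((homOf (Equiv.sumCongr (Equiv.refl S.carrier) (cmplComp f g)) : sumObj ⟨S.carrier⟩ (sumObj (cmpl f) (cmpl g)) ⟶ sumObj ⟨S.carrier⟩ (cmpl (f ≫ g))) ≫
      (homOf (phi (f ≫ g)) : sumObj ⟨S.carrier⟩ (cmpl (f ≫ g)) ⟶ (⟨U.carrier⟩ : BijCat)) :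
        sumObj ⟨S.carrier⟩ (sumObj (cmpl f) (cmpl g)) ⟶ (⟨U.carrier⟩ : BijCat)) =
      (homOf (Equiv.sumAssoc S.carrier (cmpl f).carrier (cmpl g).carrier).symm :
        sumObj ⟨S.carrier⟩ (sumObj (cmpl f) (cmpl g)) ⟶
          sumObj (sumObj ⟨S.carrier⟩ (cmpl f)) (cmpl g)) ≫
      (homOf (Equiv.sumCongr (phi f) (Equiv.refl (cmpl g).carrier)) :
        sumObj (sumObj ⟨S.carrier⟩ (cmpl f)) (cmpl g) ⟶ sumObj ⟨T.carrier⟩ (cmpl g)) ≫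
      (homOf (phi g) : sumObj ⟨T.carrier⟩ (cmpl g) ⟶ (⟨U.carrier⟩ : BijCat)) := by
    apply Equiv.ext
    rintro (s | (c | c)) <;> rfl
  unfold Fmap
  rw [← step3, Category.assoc, ← M.V.map_comp, comp_eq, M.V.map_comp, M.V.map_comp]
  slice_lhs 1 2 => rw [← step2]
  slice_lhs 2 3 => rw [step1]
  simp only [Category.assoc]

/-- The FI-module associated to a `Com`-module. -/
noncomputable def Fobj (M : ComModule R) : FinInjCat ⥤ ModuleCat.{0} R where
  obj S := M.V.obj ⟨S.carrier⟩
  map f := Fmap M f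
  map_id := Fmap_id M
  map_comp := Fmap_comp M

end Construction


section Inverse

variable {R}

lemma Nmap_congr (N : FinInjCat ⥤ ModuleCat.{0} R) {S T : FinInjCat} {u u' : S ⟶ T}
    (h : ∀ x, emb u x = emb u' x) : N.map u = N.map u' :=
  congrArg N.map (Function.Embedding.ext h)

/-- The underlying species of the `Com`-module associated to an FI-module. -/
noncomputable def Vof (N : FinInjCat ⥤ ModuleCat.{0} R) : BijCat ⥤ ModuleCat.{0} R where
  obj X := N.obj ⟨X.carrier⟩
  map {X Y} e := N.map (fhomOf (bij e).toEmbedding :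
    (⟨X.carrier⟩ : FinInjCat) ⟶ (⟨Y.carrier⟩ : FinInjCat))
  map_id X := by
    have h : (fhomOf (bij (𝟙 X)).toEmbedding :
        (⟨X.carrier⟩ : FinInjCat) ⟶ (⟨X.carrier⟩ : FinInjCat)) =
        𝟙 (⟨X.carrier⟩ : FinInjCat) := Function.Embedding.ext fun x => rfl
    show N.map (fhomOf (bij (𝟙 X)).toEmbedding :
        (⟨X.carrier⟩ : FinInjCat) ⟶ (⟨X.carrier⟩ : FinInjCat)) = 𝟙 (N.obj ⟨X.carrier⟩)
    rw [h, N.map_id]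
  map_comp {X Y Z} e f := by
    rw [← N.map_comp]
    exact Nmap_congr N fun x => rfl

lemma Vof_map (N : FinInjCat ⥤ ModuleCat.{0} R) {X Y : BijCat} (e : X ⟶ Y) :
    (Vof N).map e = N.map (fhomOf (bij e).toEmbedding :
      (⟨X.carrier⟩ : FinInjCat) ⟶ (⟨Y.carrier⟩ : FinInjCat)) := rfl

/-- The canonical inclusion as a morphism of `FI`. -/
def inclHom (X Y : BijCat) :
    (⟨X.carrier⟩ : FinInjCat) ⟶ (⟨Sum X.carrier Y.carrier⟩ : FinInjCat) :=
  fhomOf ⟨Sum.inl, Sum.inl_injective⟩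

/-- The `Com`-module associated to an FI-module. -/
noncomputable def Gobj (N : FinInjCat ⥤ ModuleCat.{0} R) : ComModule R where
  V := Vof N
  act X Y := N.map (inclHom X Y)
  act_unit X := by
    refine Eq.trans ?_ (Vof_map N _).symm
    exact Nmap_congr N fun x => rfl
  act_assoc X Y Z := by
    refine (N.map_comp _ _).symm.trans ((Nmap_congr N fun x => ?_).trans (N.map_comp _ _))
    rfl
  act_natural X X' Y Y' e f := by
    refine (N.map_comp _ _).symm.trans ((Nmap_congr N fun x => ?_).trans (N.map_comp _ _))
    rfl

/-- The inverse of the complement bijection for the canonical inclusion. -/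
noncomputable def invCmplInl (X Y : BijCat) :
    Y.carrier ≃ (cmpl (inclHom X Y)).carrier :=
  Equiv.ofBijective (fun y => ⟨Sum.inr y, fun s h => Sum.inl_ne_inr h⟩) (by
    constructor
    · intro a b h
      exact Sum.inr_injective (Subtype.ext_iff.mp h)
    · rintro ⟨v, hv⟩
      cases v with
      | inl x => exact (hv x rfl).elim
      | inr y => exact ⟨y, Subtype.ext rfl⟩)

lemma Fmap_inl (M : ComModule R) (X Y : BijCat) :
    Fmap M (inclHom X Y) = M.act X Y := by
  unfold Fmap
  have hphi : (homOf (phi (inclHom X Y)) :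
      sumObj ⟨X.carrier⟩ (cmpl (inclHom X Y)) ⟶ (⟨Sum X.carrier Y.carrier⟩ : BijCat)) =
      (homOf (Equiv.sumCongr (Equiv.refl X.carrier) (invCmplInl X Y).symm) :
        sumObj ⟨X.carrier⟩ (cmpl (inclHom X Y)) ⟶ (⟨Sum X.carrier Y.carrier⟩ : BijCat)) := by
    apply Equiv.ext
    rintro (x | c)
    · rfl
    · exact (congrArg Subtype.val ((invCmplInl X Y).apply_symm_apply c)).symm
  rw [hphi]
  exact act_conj M X (cmpl (inclHom X Y)) Y (invCmplInl X Y).symm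

lemma Fmap_bij (M : ComModule R) {X Y : BijCat} (e : X ⟶ Y) :
    Fmap M (fhomOf (bij e).toEmbedding :
      (⟨X.carrier⟩ : FinInjCat) ⟶ (⟨Y.carrier⟩ : FinInjCat)) = M.V.map e := by
  haveI : IsEmpty (cmpl (fhomOf (bij e).toEmbedding :
      (⟨X.carrier⟩ : FinInjCat) ⟶ (⟨Y.carrier⟩ : FinInjCat))).carrier :=
    ⟨fun c => c.2 ((bij e).symm c.1) ((bij e).apply_symm_apply c.1)⟩
  unfold Fmap
  rw [act_isEmpty, ← M.V.map_comp]
  exact Vmap_congr M fun x => rfl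

lemma Fmap_Gobj (N : FinInjCat ⥤ ModuleCat.{0} R) {S T : FinInjCat} (f : S ⟶ T) :
    Fmap (Gobj N) f = N.map f := by
  show N.map (inclHom ⟨S.carrier⟩ (cmpl f)) ≫
      N.map (fhomOf (phi f).toEmbedding :
        (⟨Sum S.carrier (cmpl f).carrier⟩ : FinInjCat) ⟶ (⟨T.carrier⟩ : FinInjCat)) =
    N.map f
  rw [← N.map_comp]
  exact Nmap_congr N fun s => rfl

end Inverse

section Functors

/-- The functor from `Com`-modules to FI-modules. -/
noncomputable def Ffun : ComModule R ⥤ (FinInjCat ⥤ ModuleCat.{0} R) where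
  obj := Fobj
  map := fun {M M'} u =>
    { app := fun S => u.τ.app ⟨S.carrier⟩
      naturality := fun {S T} f => by
        show Fmap M f ≫ u.τ.app ⟨T.carrier⟩ = u.τ.app ⟨S.carrier⟩ ≫ Fmap M' f
        unfold Fmap
        rw [Category.assoc, u.τ.naturality, ← Category.assoc, u.compat, Category.assoc] }
  map_id M := by apply NatTrans.ext; funext S; rfl
  map_comp f g := by apply NatTrans.ext; funext S; rfl

/-- The functor from FI-modules to `Com`-modules. -/
noncomputable def Gfun : (FinInjCat ⥤ ModuleCat.{0} R) ⥤ ComModule R where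
  obj := Gobj
  map := fun {N N'} η =>
    { τ :=
        { app := fun X => η.app ⟨X.carrier⟩
          naturality := fun {X Y} e => η.naturality ((fhomOf (bij e).toEmbedding :
            (⟨X.carrier⟩ : FinInjCat) ⟶ (⟨Y.carrier⟩ : FinInjCat))) }
      compat := fun X Y => η.naturality (inclHom X Y) }
  map_id N := by apply ComModuleHom.ext; apply NatTrans.ext; funext X; rfl
  map_comp f g := by apply ComModuleHom.ext; apply NatTrans.ext; funext X; rfl

/-- The unit isomorphism. -/
noncomputable def unitIso : 𝟭 (ComModule R) ≅ Ffun R ⋙ Gfun R :=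
  NatIso.ofComponents
    (fun M =>
      { hom :=
          { τ :=
              { app := fun X => 𝟙 (M.V.obj X)
                naturality := fun {X Y} e =>
                  (Category.comp_id _).trans
                    ((Fmap_bij M e).symm.trans (Category.id_comp _).symm) }
            compat := fun X Y =>
              (Category.comp_id _).trans
                ((Fmap_inl M X Y).symm.trans (Category.id_comp _).symm) }
        inv :=
          { τ :=
              { app := fun X => 𝟙 (M.V.obj X)
                naturality := fun {X Y} e =>
                  (Category.comp_id _).trans
                    ((Fmap_bij M e).trans (Category.id_comp _).symm) }
            compat := fun X Y =>
              (Category.comp_id _).trans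
                ((Fmap_inl M X Y).trans (Category.id_comp _).symm) }
        hom_inv_id := by
          apply ComModuleHom.ext; apply NatTrans.ext; funext X
          exact Category.comp_id _
        inv_hom_id := by
          apply ComModuleHom.ext; apply NatTrans.ext; funext X
          exact Category.comp_id _ })
    (fun {M M'} u => by
      apply ComModuleHom.ext; apply NatTrans.ext; funext X
      exact (Category.comp_id _).trans (Category.id_comp _).symm)

/-- The counit isomorphism. -/
noncomputable def counitIso : Gfun R ⋙ Ffun R ≅ 𝟭 (FinInjCat ⥤ ModuleCat.{0} R) :=
  NatIso.ofComponents
    (fun N =>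
      NatIso.ofComponents (fun S => Iso.refl (N.obj S))
        (fun {S T} f =>
          (Category.comp_id _).trans
            ((Fmap_Gobj N f).trans (Category.id_comp _).symm)))
    (fun {N N'} η => by
      apply NatTrans.ext; funext S
      exact (Category.comp_id _).trans (Category.id_comp _).symm)

end Functors

/-- Let `R` be a commutative ring.  The category of left modules over
the commutative monoid `Com` in the Day-convolution symmetric monoidal category of
species in `R`-modules is equivalent to the category of FI-modules in `R`-modules, i.e.
the functor category from `FI` to `R`-modules.  Under this equivalence, a `Com`-module
`M` acquires, for each inclusion `S ⊆ T` of finite sets (it suffices to consider the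
canonical inclusions `X ⊆ X ⊔ Y`), the transition map
`M(S) ≅ M(S) ⊗ Com(T∖S) → M(T)` induced by the module structure. -/
theorem comModule_equivalence_FIModules :
    ∃ E : ComModule R ≌ (FinInjCat ⥤ ModuleCat.{0} R),
      ∀ (M : ComModule R) (X Y : BijCat),
        ∃ (h1 : (E.functor.obj M).obj (toFinInj X) = M.V.obj X)
          (h2 : (E.functor.obj M).obj (toFinInj (sumObj X Y)) = M.V.obj (sumObj X Y)),
          (E.functor.obj M).map (inlEmb X Y) =
            eqToHom h1 ≫ M.act X Y ≫ eqToHom h2.symm := by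
  refine ⟨CategoryTheory.Equivalence.mk (Ffun R) (Gfun R) (unitIso R) (counitIso R), ?_⟩
  intro M X Y
  refine ⟨rfl, rfl, ?_⟩
  have h : M.act X Y = eqToHom rfl ≫ M.act X Y ≫ eqToHom (Eq.symm rfl) := by simp
  exact (Fmap_inl M X Y).trans h
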